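/- arXiv:1804.03324 — 2 statements merged into one kernel-verified Lean document; each statement's English description precedes it below -/
import Mathlib

section
/- Let $H_n$ be a finite-dimensional subspace of $H^s(\mathbb{R}^N)$ (with the $H^s$ norm $\|\cdot\|$) and let $l>0$. Then there exists $\tau>0$ such that for all $u\in H_n$ with $\|u\|\le\tau$, $\frac12\int_{\mathbb{R}^N}|u|^2\,dx \ge \int_{\{x:|u(x)|>l\}}|u(x)|^2\,dx$. -/
open MeasureTheory RealInnerProductSpace

lemma myCoeFnSum {α E : Type*} [MeasurableSpace α] {μ : Measure α} [NormedAddCommGroup E]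
    [NormedSpace ℝ E] {p : ENNReal} {ι : Type*} (s : Finset ι) (c : ι → ℝ) (f : ι → Lp E p μ) :
    ⇑(∑ i ∈ s, c i • f i) =ᵐ[μ] fun x => ∑ i ∈ s, c i • (f i x) := by
  classical
  induction s using Finset.induction_on with
  | empty => simp only [Finset.sum_empty]; exact Lp.coeFn_zero E p μ
  | @insert a s ha ih =>
    rw [Finset.sum_insert ha]
    filter_upwards [Lp.coeFn_add (c a • f a) (∑ i ∈ s, c i • f i), Lp.coeFn_smul (c a) (f a), ih]
      with x h1 h2 h3
    rw [h1, Pi.add_apply, h2, Pi.smul_apply, h3, Finset.sum_insert ha]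

/-- Squared Gagliardo seminorm. -/
noncomputable def gagliardoSq (N : ℕ) (s : ℝ) (u : EuclideanSpace ℝ (Fin N) → ℝ) : ℝ :=
  ∫ x, ∫ y, (u x - u y)^2 / ‖x - y‖ ^ ((N : ℝ) + 2*s)

/-- The $H^s$ norm. -/
noncomputable def hsNorm (N : ℕ) (s : ℝ) (u : EuclideanSpace ℝ (Fin N) → ℝ) : ℝ :=
  Real.sqrt (gagliardoSq N s u + ∫ x, (u x)^2)

set_option maxHeartbeats 1000000 in
theorem stmt_8 {N : ℕ} {s : ℝ} (hs : 0 < s) (hs1 : s < 1) (hN : 2 * s < N)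
    (Hn : Submodule ℝ (EuclideanSpace ℝ (Fin N) → ℝ))
    (hfin : FiniteDimensional ℝ Hn)
    (hmem : ∀ u ∈ Hn, MemLp u 2 volume)
    (l : ℝ) (hl : 0 < l) :
    ∃ τ : ℝ, 0 < τ ∧ ∀ u ∈ Hn, hsNorm N s u ≤ τ →
      (1/2) * ∫ x, (u x)^2 ≥ ∫ x in {x | l < |u x|}, (u x)^2 := by
  classical
  haveI := hfin
  set μ : Measure (EuclideanSpace ℝ (Fin N)) := volume with hμ
  -- the linear map into L²
  let T : Hn →ₗ[ℝ] Lp ℝ 2 μ :=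
    { toFun := fun u => MemLp.toLp u.1 (hmem u.1 u.2)
      map_add' := fun u w => MemLp.toLp_add (hmem u.1 u.2) (hmem w.1 w.2)
      map_smul' := fun c u => MemLp.toLp_const_smul c (hmem u.1 u.2) }
  set V := LinearMap.range T with hV
  haveI hfinV : FiniteDimensional ℝ V := LinearMap.finiteDimensional_range T
  set m := Module.finrank ℝ V with hm
  let b : OrthonormalBasis (Fin m) ℝ V := stdOrthonormalBasis ℝ V
  -- the dominating function
  set g : EuclideanSpace ℝ (Fin N) → ℝ := fun x => ∑ i : Fin m, ((b i : Lp ℝ 2 μ) x)^2 with hg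
  have g_nonneg : ∀ x, 0 ≤ g x := fun x => Finset.sum_nonneg fun i _ => sq_nonneg _
  have hg_int : Integrable g μ :=
    integrable_finset_sum _ fun i _ => (Lp.memLp (b i : Lp ℝ 2 μ)).integrable_sq
  obtain ⟨δ, hδ0, hδ⟩ := (memLp_one_iff_integrable.mpr hg_int).eLpNorm_indicator_le
    le_rfl ENNReal.one_ne_top (by norm_num : (0:ℝ) < 1/2)
  refine ⟨l * Real.sqrt δ, by positivity, fun u hu hτ => ?_⟩
  -- basic quantities
  set I := ∫ x, (u x)^2 ∂μ with hIdef
  have hI0 : 0 ≤ I := integral_nonneg fun x => sq_nonneg _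
  have hIτ : I ≤ l^2 * δ := by
    have hG : 0 ≤ gagliardoSq N s u :=
      integral_nonneg fun x => integral_nonneg fun y => by positivity
    have h1 : I ≤ gagliardoSq N s u + I := le_add_of_nonneg_left hG
    have h2 : gagliardoSq N s u + I = (hsNorm N s u)^2 := by
      rw [hsNorm, Real.sq_sqrt (add_nonneg hG hI0)]
    have h3 : (hsNorm N s u)^2 ≤ (l * Real.sqrt δ)^2 :=
      pow_le_pow_left₀ (Real.sqrt_nonneg _) hτ 2
    have h4 : (l * Real.sqrt δ)^2 = l^2 * δ := by
      rw [mul_pow, Real.sq_sqrt hδ0.le]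
    linarith
  -- the L² element
  set vV : V := ⟨T ⟨u, hu⟩, LinearMap.mem_range_self _ _⟩ with hvV
  set v : Lp ℝ 2 μ := (vV : Lp ℝ 2 μ) with hv
  have huv : u =ᵐ[μ] ⇑v := ((hmem u hu).coeFn_toLp).symm
  set a : Fin m → ℝ := fun i => b.repr vV i with ha
  have hParseval : ∑ i : Fin m, (a i)^2 = ‖v‖^2 := by
    have h1 : ‖vV‖ = ‖b.repr vV‖ := (b.repr.norm_map vV).symm
    have h2 : ‖b.repr vV‖^2 = ∑ i : Fin m, (a i)^2 := by
      rw [EuclideanSpace.norm_eq, Real.sq_sqrt (Finset.sum_nonneg fun i _ => sq_nonneg _)]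
      exact Finset.sum_congr rfl fun i _ => by rw [Real.norm_eq_abs, sq_abs]
    have h3 : ‖v‖ = ‖vV‖ := rfl
    rw [h3, h1, h2]
  have hvI : ‖v‖^2 = I := by
    have h1 : ‖v‖^2 = ⟪v, v⟫ := (real_inner_self_eq_norm_sq v).symm
    have h2 : ⟪v, v⟫ = ∫ x, ⟪v x, v x⟫ ∂μ := L2.inner_def v v
    have h3 : ∫ x, ⟪v x, v x⟫ ∂μ = ∫ x, (u x)^2 ∂μ := by
      refine integral_congr_ae ?_
      filter_upwards [huv] with x hx
      rw [← hx]
      simp [RCLike.inner_apply, conj_trivial, sq]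
    rw [h1, h2, h3]
  -- decomposition of u
  set w : EuclideanSpace ℝ (Fin N) → ℝ :=
    fun x => ∑ i : Fin m, a i * ((b i : Lp ℝ 2 μ) x) with hw
  have huw : u =ᵐ[μ] w := by
    have hsum : (∑ i : Fin m, a i • ((b i : V) : Lp ℝ 2 μ)) = v := by
      have hb := b.sum_repr vV
      calc (∑ i : Fin m, a i • ((b i : V) : Lp ℝ 2 μ))
          = ((∑ i : Fin m, a i • b i : V) : Lp ℝ 2 μ) := by push_cast; rfl
        _ = v := by rw [hb]
    refine huv.trans ?_
    rw [← hsum]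
    filter_upwards [myCoeFnSum Finset.univ a (fun i => ((b i : V) : Lp ℝ 2 μ))] with x hx
    simpa [smul_eq_mul] using hx
  -- measurable representative and the set
  have hmk := (hmem u hu).1
  set u' : EuclideanSpace ℝ (Fin N) → ℝ := hmk.mk u with hu'
  have hmeas : StronglyMeasurable u' := hmk.stronglyMeasurable_mk
  have hae : u =ᵐ[μ] u' := hmk.ae_eq_mk
  set B : Set (EuclideanSpace ℝ (Fin N)) := {x | l < |u' x|} with hB
  have hBmeas : MeasurableSet B := measurableSet_lt measurable_const hmeas.measurable.abs
  have hAB : {x | l < |u x|} =ᵐ[μ] B := by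
    rw [Filter.eventuallyEq_set]
    filter_upwards [hae] with x hx
    simp [hB, hx]
  -- Chebyshev bound on the measure of B
  have hμB : μ B ≤ ENNReal.ofReal δ := by
    have hsub : B ⊆ {x | ENNReal.ofReal l ≤ ‖u' x‖ₑ} := by
      intro x hx
      rw [Set.mem_setOf_eq, ← ofReal_norm]
      exact ENNReal.ofReal_le_ofReal (le_of_lt (by rwa [Real.norm_eq_abs]))
    have hcheb := meas_ge_le_mul_pow_eLpNorm_enorm μ two_ne_zero ENNReal.ofNat_ne_top
      hmeas.aestronglyMeasurable (ε := ENNReal.ofReal l)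
      (by simp [ENNReal.ofReal_eq_zero, not_le, hl]) (fun h => absurd h ENNReal.ofReal_ne_top)
    have heLp : eLpNorm u' 2 μ = ENNReal.ofReal ‖v‖ := by
      rw [← eLpNorm_congr_ae hae, eLpNorm_congr_ae huv, hv, Lp.norm_def,
        ENNReal.ofReal_toReal (Lp.eLpNorm_ne_top v)]
    calc μ B ≤ μ {x | ENNReal.ofReal l ≤ ‖u' x‖ₑ} := measure_mono hsub
      _ ≤ (ENNReal.ofReal l)⁻¹ ^ (2:ENNReal).toReal * eLpNorm u' 2 μ ^ (2:ENNReal).toReal := hcheb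
      _ = ENNReal.ofReal (l⁻¹ ^ 2 * ‖v‖ ^ 2) := by
          rw [heLp, ENNReal.toReal_ofNat, ← ENNReal.ofReal_inv_of_pos hl,
            ENNReal.ofReal_rpow_of_nonneg (by positivity) (by norm_num),
            ENNReal.ofReal_rpow_of_nonneg (norm_nonneg _) (by norm_num),
            ← ENNReal.ofReal_mul (by positivity)]
          norm_num [Real.rpow_natCast]
      _ ≤ ENNReal.ofReal δ := by
          apply ENNReal.ofReal_le_ofReal
          rw [hvI]
          calc l⁻¹ ^ 2 * I ≤ l⁻¹ ^ 2 * (l ^ 2 * δ) :=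
                mul_le_mul_of_nonneg_left hIτ (by positivity)
            _ = δ := by field_simp
  -- conclusion
  have hBg : ∫ x in B, g x ∂μ ≤ 1/2 := by
    have h1 := hδ B hBmeas hμB
    rw [eLpNorm_indicator_eq_eLpNorm_restrict hBmeas] at h1
    have h2 : ∫ x in B, g x ∂μ = (eLpNorm g 1 (μ.restrict B)).toReal := by
      rw [eLpNorm_one_eq_lintegral_enorm,
        ← integral_norm_eq_lintegral_enorm (hg_int.aestronglyMeasurable.restrict)]
      exact integral_congr_ae (Filter.Eventually.of_forall fun x =>
        (Real.norm_of_nonneg (g_nonneg x)).symm)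
    rw [h2]
    calc (eLpNorm g 1 (μ.restrict B)).toReal ≤ (ENNReal.ofReal (1/2)).toReal :=
          ENNReal.toReal_mono ENNReal.ofReal_ne_top h1
      _ = 1/2 := by rw [ENNReal.toReal_ofReal]; norm_num
  have key : ∫ x in {x | l < |u x|}, (u x)^2 ∂μ ≤ (1/2) * I := by
    rw [Measure.restrict_congr_set hAB]
    have huw2 : (fun x => (u x)^2) =ᵐ[μ] fun x => (w x)^2 := huw.mono fun x hx => by
      simp only [hx]
    calc ∫ x in B, (u x)^2 ∂μ = ∫ x in B, (w x)^2 ∂μ :=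
          integral_congr_ae (ae_restrict_of_ae huw2)
      _ ≤ ∫ x in B, (∑ i : Fin m, (a i)^2) * g x ∂μ := by
          refine setIntegral_mono_on
            (((hmem u hu).integrable_sq.congr huw2).integrableOn)
            ((hg_int.const_mul _).integrableOn) hBmeas fun x _ => ?_
          simpa [hw, hg, Finset.mul_sum] using
            Finset.sum_mul_sq_le_sq_mul_sq Finset.univ a (fun i => ((b i : Lp ℝ 2 μ) x))
      _ = (∑ i : Fin m, (a i)^2) * ∫ x in B, g x ∂μ := integral_const_mul _ _
      _ ≤ (∑ i : Fin m, (a i)^2) * (1/2) :=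
          mul_le_mul_of_nonneg_left hBg (Finset.sum_nonneg fun i _ => sq_nonneg _)
      _ = (1/2) * I := by rw [hParseval, hvI, mul_comm]
  exact key
end

section
/- Let $H$ be a real Hilbert space continuously embedded in $L^2(\mathbb{R}^N)$ and locally compactly embedded, i.e. bounded sequences in $H$ have subsequences converging in $L^2(B_R)$ for every $R>0$. Let $r\in(1,2)$, $\xi\in L^{2/(2-r)}(\mathbb{R}^N)$ nonnegative, and let $g:\mathbb{R}^N\times\mathbb{R}\to\mathbb{R}$ satisfy $|g(x,u)|\le r\,\xi(x)|u|^{r-1}$. If $(u_n)\subset H$ is bounded and $u_n\rightharpoonup u$ in $H$ with $u_n\to u$ in $L^2_{loc}(\mathbb{R}^N)$, then $\int_{\mathbb{R}^N}\big(g(x,u_n)-g(x,u)\big)(u_n-u)\,dx\to0$ as $n\to\infty$. -/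
open MeasureTheory Filter Topology ENNReal

lemma holder3 {α : Type*} [MeasurableSpace α] (μ : Measure α)
    {f g h : α → ℝ≥0∞} (hf : AEMeasurable f μ) (hg : AEMeasurable g μ) (hh : AEMeasurable h μ)
    {p q s : ℝ} (hp : 0 < p) (hq : 0 < q) (hs : 0 < s) (hpqs : 1/p + 1/q + 1/s = 1) :
    ∫⁻ x, f x * g x * h x ∂μ ≤
      (∫⁻ x, f x ^ p ∂μ) ^ (1/p) * (∫⁻ x, g x ^ q ∂μ) ^ (1/q) *
        (∫⁻ x, h x ^ s ∂μ) ^ (1/s) := by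
  have key := ENNReal.lintegral_prod_norm_pow_le (μ := μ) Finset.univ
    (f := ![fun x => f x ^ p, fun x => g x ^ q, fun x => h x ^ s])
    (p := ![1/p, 1/q, 1/s])
    (by
      intro i _
      fin_cases i
      · exact hf.pow_const p
      · exact hg.pow_const q
      · exact hh.pow_const s)
    (by simpa [Fin.sum_univ_three, one_div] using hpqs)
    (by intro i _; fin_cases i <;> simp <;> positivity)
  have e : ∀ (t : ℝ) (_ : 0 < t) (x : ℝ≥0∞), (x ^ t) ^ (1/t) = x := fun t ht x => by
    rw [← ENNReal.rpow_mul, mul_one_div_cancel ht.ne', ENNReal.rpow_one]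
  simp only [Fin.prod_univ_three, Matrix.cons_val_zero, Matrix.cons_val_one, Matrix.head_cons,
    Matrix.cons_val_two, Matrix.tail_cons, e _ hp, e _ hq, e _ hs] at key
  exact key

theorem ofReal_norm_eq_coe_nnnorm {E : Type*} [SeminormedAddGroup E] (a : E) :
    ENNReal.ofReal ‖a‖ = (‖a‖₊ : ℝ≥0∞) := ofReal_norm a

set_option maxHeartbeats 2000000 in
theorem stmt_11 {N : ℕ} {r : ℝ} (hr1 : 1 < r) (hr2 : r < 2)
    {H : Type*} [NormedAddCommGroup H] [InnerProductSpace ℝ H] [CompleteSpace H]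
    (E : H →L[ℝ] (Lp ℝ 2 (volume : Measure (EuclideanSpace ℝ (Fin N)))))
    (hE_inj : Function.Injective E)
    -- local compactness of the embedding
    (hcomp : ∀ (v : ℕ → H) (C : ℝ), (∀ n, ‖v n‖ ≤ C) → ∀ R : ℝ, 0 < R →
      ∃ φ : ℕ → ℕ, StrictMono φ ∧ ∃ w : EuclideanSpace ℝ (Fin N) → ℝ,
        Tendsto (fun n => ∫ x in Metric.ball (0 : EuclideanSpace ℝ (Fin N)) R,
          ((E (v (φ n)) : EuclideanSpace ℝ (Fin N) → ℝ) x - w x)^2) atTop (nhds 0))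
    (ξ : EuclideanSpace ℝ (Fin N) → ℝ) (hξ_nonneg : ∀ x, 0 ≤ ξ x)
    (hξ : MemLp ξ (ENNReal.ofReal (2/(2-r))) volume)
    (g : EuclideanSpace ℝ (Fin N) → ℝ → ℝ)
    (hg : ∀ x t, |g x t| ≤ r * ξ x * |t| ^ (r - 1))
    (u : ℕ → H) (ulim : H)
    (hbdd : ∃ C : ℝ, ∀ n, ‖u n‖ ≤ C)
    (hweak : ∀ v : H, Tendsto (fun n => (inner ℝ (u n) v : ℝ)) atTop (nhds (inner ℝ ulim v)))
    (hloc : ∀ R : ℝ, 0 < R →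
      Tendsto (fun n => ∫ x in Metric.ball (0 : EuclideanSpace ℝ (Fin N)) R,
        ((E (u n) : EuclideanSpace ℝ (Fin N) → ℝ) x -
          (E ulim : EuclideanSpace ℝ (Fin N) → ℝ) x)^2) atTop (nhds 0)) :
    Tendsto (fun n => ∫ x,
        (g x ((E (u n) : EuclideanSpace ℝ (Fin N) → ℝ) x) -
          g x ((E ulim : EuclideanSpace ℝ (Fin N) → ℝ) x)) *
        ((E (u n) : EuclideanSpace ℝ (Fin N) → ℝ) x -
          (E ulim : EuclideanSpace ℝ (Fin N) → ℝ) x))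
      atTop (nhds 0) := by
  obtain ⟨C, hC⟩ := hbdd
  have hC0 : 0 ≤ C := le_trans (norm_nonneg _) (hC 0)
  have hr0 : (0:ℝ) < r := by linarith
  have h2r : (0:ℝ) < 2 - r := by linarith
  have hr1' : (0:ℝ) < r - 1 := by linarith
  set p : ℝ := 2 / (2 - r) with hpdef
  set q : ℝ := 2 / (r - 1) with hqdef
  have hp : 0 < p := by positivity
  have hq : 0 < q := by positivity
  have hpqs : 1/p + 1/q + 1/(2:ℝ) = 1 := by
    rw [hpdef, hqdef, one_div_div, one_div_div]
    ring
  have hrq : (r - 1) * q = 2 := by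
    rw [hqdef, mul_comm, div_mul_cancel₀ _ hr1'.ne']
  -- abbreviations
  set X : EuclideanSpace ℝ (Fin N) → ℝ≥0∞ := fun x => (‖ξ x‖₊ : ℝ≥0∞) with hX
  set A : ℕ → EuclideanSpace ℝ (Fin N) → ℝ≥0∞ :=
    fun n x => (‖(E (u n) : EuclideanSpace ℝ (Fin N) → ℝ) x‖₊ : ℝ≥0∞) ^ (r-1) with hA
  set A' : EuclideanSpace ℝ (Fin N) → ℝ≥0∞ :=
    fun x => (‖(E ulim : EuclideanSpace ℝ (Fin N) → ℝ) x‖₊ : ℝ≥0∞) ^ (r-1) with hA'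
  set B : ℕ → EuclideanSpace ℝ (Fin N) → ℝ≥0∞ :=
    fun n x => (‖(E (u n) : EuclideanSpace ℝ (Fin N) → ℝ) x -
      (E ulim : EuclideanSpace ℝ (Fin N) → ℝ) x‖₊ : ℝ≥0∞) with hB
  set I : ℕ → ℝ≥0∞ := fun n =>
    ∫⁻ x, (‖(g x ((E (u n) : EuclideanSpace ℝ (Fin N) → ℝ) x) -
        g x ((E ulim : EuclideanSpace ℝ (Fin N) → ℝ) x)) *
        ((E (u n) : EuclideanSpace ℝ (Fin N) → ℝ) x -
          (E ulim : EuclideanSpace ℝ (Fin N) → ℝ) x)‖₊ : ℝ≥0∞) with hIdef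
  -- measurability
  have mX : AEMeasurable X volume := hξ.aestronglyMeasurable.enorm
  have mA : ∀ n, AEMeasurable (A n) volume := fun n =>
    (Lp.aestronglyMeasurable (E (u n))).enorm.pow_const _
  have mA' : AEMeasurable A' volume :=
    (Lp.aestronglyMeasurable (E ulim)).enorm.pow_const _
  have mB : ∀ n, AEMeasurable (B n) volume := fun n =>
    ((Lp.aestronglyMeasurable (E (u n))).sub (Lp.aestronglyMeasurable (E ulim))).enorm
  -- uniform L² bound
  set K : ℝ≥0∞ := ENNReal.ofReal (‖E‖ * C + ‖E ulim‖ + 1) with hK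
  have hKtop : K ≠ ∞ := ENNReal.ofReal_ne_top
  have eLp_eq : ∀ f : Lp ℝ 2 (volume : Measure (EuclideanSpace ℝ (Fin N))),
      eLpNorm (⇑f) 2 volume = ENNReal.ofReal ‖f‖ := fun f => by
    rw [Lp.norm_def, ENNReal.ofReal_toReal (Lp.eLpNorm_ne_top f)]
  have hEn : ∀ n, ‖E (u n)‖ ≤ ‖E‖ * C :=
    fun n => le_trans (E.le_opNorm _) (mul_le_mul_of_nonneg_left (hC n) (norm_nonneg _))
  have hVK : ∀ n, eLpNorm (⇑(E (u n))) 2 volume ≤ K := fun n => by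
    rw [eLp_eq]
    exact ENNReal.ofReal_le_ofReal (by have := hEn n; have := norm_nonneg (E ulim); linarith)
  have hWK : eLpNorm (⇑(E ulim)) 2 volume ≤ K := by
    rw [eLp_eq]
    refine ENNReal.ofReal_le_ofReal ?_
    have : 0 ≤ ‖E‖ * C := mul_nonneg (norm_nonneg _) hC0
    linarith
  have hBK : ∀ n, eLpNorm (fun x => (E (u n) : EuclideanSpace ℝ (Fin N) → ℝ) x -
      (E ulim : EuclideanSpace ℝ (Fin N) → ℝ) x) 2 volume ≤ K := fun n => by
    have heq : (fun x => (E (u n) : EuclideanSpace ℝ (Fin N) → ℝ) x -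
        (E ulim : EuclideanSpace ℝ (Fin N) → ℝ) x) =ᵐ[volume] ⇑(E (u n) - E ulim) := by
      filter_upwards [Lp.coeFn_sub (E (u n)) (E ulim)] with x hx
      exact hx.symm
    rw [eLpNorm_congr_ae heq, eLp_eq]
    refine ENNReal.ofReal_le_ofReal ?_
    have h1 : ‖E (u n) - E ulim‖ ≤ ‖E (u n)‖ + ‖E ulim‖ := norm_sub_le _ _
    have := hEn n
    linarith
  -- lintegrals of squares
  have lint_sq : ∀ f : EuclideanSpace ℝ (Fin N) → ℝ,
      (∫⁻ x, (‖f x‖₊ : ℝ≥0∞) ^ (2:ℝ) ∂volume) = eLpNorm f 2 volume ^ (2:ℝ) := fun f => by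
    rw [eLpNorm_eq_lintegral_rpow_enorm_toReal two_ne_zero ENNReal.ofNat_ne_top]
    rw [← ENNReal.rpow_mul]
    norm_num
    rfl
  -- bounds on Hölder factors
  have midbound : ∀ n (S : Set (EuclideanSpace ℝ (Fin N))),
      (∫⁻ x in S, A n x ^ q ∂volume) ^ (1/q) ≤ K ^ ((2:ℝ)/q) := by
    intro n S
    have h1 : (∫⁻ x in S, A n x ^ q ∂volume)
        = ∫⁻ x in S, (‖(E (u n) : EuclideanSpace ℝ (Fin N) → ℝ) x‖₊ : ℝ≥0∞) ^ (2:ℝ) ∂volume := by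
      refine lintegral_congr fun x => ?_
      rw [hA]
      rw [← ENNReal.rpow_mul, hrq]
    rw [h1]
    calc (∫⁻ x in S, (‖(E (u n) : EuclideanSpace ℝ (Fin N) → ℝ) x‖₊ : ℝ≥0∞) ^ (2:ℝ) ∂volume) ^ (1/q)
        ≤ (∫⁻ x, (‖(E (u n) : EuclideanSpace ℝ (Fin N) → ℝ) x‖₊ : ℝ≥0∞) ^ (2:ℝ) ∂volume) ^ (1/q) :=
          ENNReal.rpow_le_rpow (setLIntegral_le_lintegral _ _) (by positivity)
      _ = (eLpNorm (⇑(E (u n))) 2 volume ^ (2:ℝ)) ^ (1/q) := by rw [lint_sq]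
      _ ≤ (K ^ (2:ℝ)) ^ (1/q) := by
          exact ENNReal.rpow_le_rpow (ENNReal.rpow_le_rpow (hVK n) (by norm_num)) (by positivity)
      _ = K ^ ((2:ℝ)/q) := by
          rw [← ENNReal.rpow_mul]
          ring_nf
  have midbound' : ∀ (S : Set (EuclideanSpace ℝ (Fin N))),
      (∫⁻ x in S, A' x ^ q ∂volume) ^ (1/q) ≤ K ^ ((2:ℝ)/q) := by
    intro S
    have h1 : (∫⁻ x in S, A' x ^ q ∂volume)
        = ∫⁻ x in S, (‖(E ulim : EuclideanSpace ℝ (Fin N) → ℝ) x‖₊ : ℝ≥0∞) ^ (2:ℝ) ∂volume := by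
      refine lintegral_congr fun x => ?_
      rw [hA']
      rw [← ENNReal.rpow_mul, hrq]
    rw [h1]
    calc (∫⁻ x in S, (‖(E ulim : EuclideanSpace ℝ (Fin N) → ℝ) x‖₊ : ℝ≥0∞) ^ (2:ℝ) ∂volume) ^ (1/q)
        ≤ (∫⁻ x, (‖(E ulim : EuclideanSpace ℝ (Fin N) → ℝ) x‖₊ : ℝ≥0∞) ^ (2:ℝ) ∂volume) ^ (1/q) :=
          ENNReal.rpow_le_rpow (setLIntegral_le_lintegral _ _) (by positivity)
      _ = (eLpNorm (⇑(E ulim)) 2 volume ^ (2:ℝ)) ^ (1/q) := by rw [lint_sq]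
      _ ≤ (K ^ (2:ℝ)) ^ (1/q) := by
          exact ENNReal.rpow_le_rpow (ENNReal.rpow_le_rpow hWK (by norm_num)) (by positivity)
      _ = K ^ ((2:ℝ)/q) := by
          rw [← ENNReal.rpow_mul]
          ring_nf
  have Bbound : ∀ n (S : Set (EuclideanSpace ℝ (Fin N))),
      (∫⁻ x in S, B n x ^ (2:ℝ) ∂volume) ^ (1/(2:ℝ)) ≤ K := by
    intro n S
    calc (∫⁻ x in S, B n x ^ (2:ℝ) ∂volume) ^ (1/(2:ℝ))
        ≤ (∫⁻ x, B n x ^ (2:ℝ) ∂volume) ^ (1/(2:ℝ)) :=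
          ENNReal.rpow_le_rpow (setLIntegral_le_lintegral _ _) (by norm_num)
      _ = (eLpNorm (fun x => (E (u n) : EuclideanSpace ℝ (Fin N) → ℝ) x -
            (E ulim : EuclideanSpace ℝ (Fin N) → ℝ) x) 2 volume ^ (2:ℝ)) ^ (1/(2:ℝ)) := by
          rw [hB, lint_sq]
      _ = eLpNorm (fun x => (E (u n) : EuclideanSpace ℝ (Fin N) → ℝ) x -
            (E ulim : EuclideanSpace ℝ (Fin N) → ℝ) x) 2 volume := by
          rw [← ENNReal.rpow_mul]
          norm_num
      _ ≤ K := hBK n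
  -- finiteness of ∫ X^p
  have hΞtop : (∫⁻ x, X x ^ p ∂volume) ≠ ∞ := by
    intro hcon
    have h2 := hξ.2
    rw [eLpNorm_eq_lintegral_rpow_enorm_toReal (ENNReal.ofReal_pos.mpr hp).ne' ENNReal.ofReal_ne_top] at h2
    rw [ENNReal.toReal_ofReal hp.le] at h2
    rw [hX] at hcon
    rw [show (∫⁻ x, ‖ξ x‖ₑ ^ p ∂volume) = ∞ from hcon] at h2
    rw [ENNReal.top_rpow_of_pos (by positivity)] at h2
    exact (lt_irrefl _ h2).elim
  set KΞ : ℝ≥0∞ := (∫⁻ x, X x ^ p ∂volume) ^ (1/p) with hKΞ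
  have hKΞtop : KΞ ≠ ∞ := ENNReal.rpow_ne_top_of_nonneg (by positivity) hΞtop
  have Xbound : ∀ S : Set (EuclideanSpace ℝ (Fin N)),
      (∫⁻ x in S, X x ^ p ∂volume) ^ (1/p) ≤ KΞ :=
    fun S => ENNReal.rpow_le_rpow (setLIntegral_le_lintegral _ _) (by positivity)
  -- pointwise bound
  have hpt : ∀ n x, (‖(g x ((E (u n) : EuclideanSpace ℝ (Fin N) → ℝ) x) -
        g x ((E ulim : EuclideanSpace ℝ (Fin N) → ℝ) x)) *
        ((E (u n) : EuclideanSpace ℝ (Fin N) → ℝ) x -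
          (E ulim : EuclideanSpace ℝ (Fin N) → ℝ) x)‖₊ : ℝ≥0∞) ≤
      ENNReal.ofReal r * (X x * A n x * B n x + X x * A' x * B n x) := by
    intro n x
    set t : ℝ := (E (u n) : EuclideanSpace ℝ (Fin N) → ℝ) x with ht
    set s : ℝ := (E ulim : EuclideanSpace ℝ (Fin N) → ℝ) x with hs
    have hreal : |(g x t - g x s) * (t - s)| ≤
        (r * ξ x * |t| ^ (r-1) + r * ξ x * |s| ^ (r-1)) * |t - s| := by
      rw [abs_mul]
      refine mul_le_mul_of_nonneg_right ?_ (abs_nonneg _)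
      calc |g x t - g x s| ≤ |g x t| + |g x s| := abs_sub _ _
        _ ≤ _ := add_le_add (hg x t) (hg x s)
    calc (‖(g x t - g x s) * (t - s)‖₊ : ℝ≥0∞)
        = ENNReal.ofReal (|(g x t - g x s) * (t - s)|) := by
          rw [← ofReal_norm_eq_coe_nnnorm, Real.norm_eq_abs]
      _ ≤ ENNReal.ofReal ((r * ξ x * |t| ^ (r-1) + r * ξ x * |s| ^ (r-1)) * |t - s|) :=
          ENNReal.ofReal_le_ofReal hreal
      _ = ENNReal.ofReal r * (X x * A n x * B n x + X x * A' x * B n x) := by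
          have h1 : 0 ≤ r * ξ x * |t| ^ (r-1) :=
            mul_nonneg (mul_nonneg hr0.le (hξ_nonneg x)) (Real.rpow_nonneg (abs_nonneg t) _)
          have h2 : 0 ≤ r * ξ x * |s| ^ (r-1) :=
            mul_nonneg (mul_nonneg hr0.le (hξ_nonneg x)) (Real.rpow_nonneg (abs_nonneg s) _)
          rw [ENNReal.ofReal_mul (add_nonneg h1 h2), ENNReal.ofReal_add h1 h2]
          rw [ENNReal.ofReal_mul (mul_nonneg hr0.le (hξ_nonneg x)), ENNReal.ofReal_mul hr0.le,
            ENNReal.ofReal_mul (mul_nonneg hr0.le (hξ_nonneg x)), ENNReal.ofReal_mul hr0.le]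
          rw [← ENNReal.ofReal_rpow_of_nonneg (abs_nonneg t) hr1'.le,
            ← ENNReal.ofReal_rpow_of_nonneg (abs_nonneg s) hr1'.le]
          have hXx : ENNReal.ofReal (ξ x) = X x := (Real.enorm_eq_ofReal (hξ_nonneg x)).symm
          have habs : ∀ z : ℝ, ENNReal.ofReal |z| = (‖z‖₊ : ℝ≥0∞) := fun z => by
            rw [← Real.norm_eq_abs, ofReal_norm_eq_coe_nnnorm]
          rw [hXx, habs t, habs s, habs (t - s)]
          simp only [hA, hA', hB, ← ht, ← hs]
          ring
  -- local convergence in lintegral form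
  have hCB : ∀ R : ℝ, 0 < R →
      Tendsto (fun n => ∫⁻ x in Metric.ball (0 : EuclideanSpace ℝ (Fin N)) R,
        B n x ^ (2:ℝ) ∂volume) atTop (𝓝 0) := by
    intro R hR
    have hz : ∀ z : ℝ, (‖z‖₊ : ℝ≥0∞) ^ (2:ℝ) = ENNReal.ofReal (z^2) := fun z => by
      rw [show ((2:ℝ)) = ((2:ℕ):ℝ) by norm_num, ENNReal.rpow_natCast,
        ← ofReal_norm_eq_coe_nnnorm, ← ENNReal.ofReal_pow (norm_nonneg z)]
      congr 1
      rw [Real.norm_eq_abs, sq_abs]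
    have heq : ∀ n, (∫⁻ x in Metric.ball (0 : EuclideanSpace ℝ (Fin N)) R, B n x ^ (2:ℝ) ∂volume)
        = ENNReal.ofReal (∫ x in Metric.ball (0 : EuclideanSpace ℝ (Fin N)) R,
            ((E (u n) : EuclideanSpace ℝ (Fin N) → ℝ) x -
              (E ulim : EuclideanSpace ℝ (Fin N) → ℝ) x)^2) := by
      intro n
      have hint : Integrable (fun x => ((E (u n) : EuclideanSpace ℝ (Fin N) → ℝ) x -
          (E ulim : EuclideanSpace ℝ (Fin N) → ℝ) x)^2)
          (volume.restrict (Metric.ball (0 : EuclideanSpace ℝ (Fin N)) R)) :=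
        (((Lp.memLp (E (u n))).sub (Lp.memLp (E ulim))).integrable_sq).restrict
      rw [MeasureTheory.ofReal_integral_eq_lintegral_ofReal hint
        (Eventually.of_forall fun x => sq_nonneg _)]
      refine lintegral_congr fun x => ?_
      rw [hB]
      exact hz _
    have h1 := ENNReal.tendsto_ofReal (hloc R hR)
    rw [ENNReal.ofReal_zero] at h1
    simpa only [heq] using h1
  -- tail of ξ
  have hTail : Tendsto (fun j : ℕ =>
      ∫⁻ x in (Metric.ball (0 : EuclideanSpace ℝ (Fin N)) ((j:ℝ)+1))ᶜ, X x ^ p ∂volume)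
      atTop (𝓝 0) := by
    have hball : Tendsto (fun j : ℕ =>
        ∫⁻ x in Metric.ball (0 : EuclideanSpace ℝ (Fin N)) ((j:ℝ)+1), X x ^ p ∂volume)
        atTop (𝓝 (∫⁻ x, X x ^ p ∂volume)) := by
      have h1 := lintegral_tendsto_of_tendsto_of_monotone (μ := (volume : Measure (EuclideanSpace ℝ (Fin N))))
        (f := fun j => (Metric.ball (0 : EuclideanSpace ℝ (Fin N)) ((j:ℝ)+1)).indicator
          (fun x => X x ^ p))
        (F := fun x => X x ^ p)
        (fun j => (mX.pow_const p).indicator measurableSet_ball)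
        (Eventually.of_forall fun x => by
          intro j k hjk
          exact Set.indicator_le_indicator_of_subset
            (Metric.ball_subset_ball (by
              have : (j:ℝ) ≤ (k:ℝ) := Nat.cast_le.mpr hjk
              linarith)) (fun a => zero_le) x)
        (Eventually.of_forall fun x => by
          have hev : ∀ᶠ j : ℕ in atTop, x ∈ Metric.ball (0 : EuclideanSpace ℝ (Fin N)) ((j:ℝ)+1) := by
            filter_upwards [eventually_ge_atTop ⌈‖x‖⌉₊] with j hj
            rw [Metric.mem_ball, dist_zero_right]
            calc ‖x‖ ≤ (⌈‖x‖⌉₊ : ℝ) := Nat.le_ceil _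
              _ ≤ (j:ℝ) := Nat.cast_le.mpr hj
              _ < (j:ℝ) + 1 := by linarith
          exact Tendsto.congr' (hev.mono fun j hj => (Set.indicator_of_mem hj _).symm)
            tendsto_const_nhds)
      simpa only [lintegral_indicator measurableSet_ball] using h1
    have hsub : ∀ j : ℕ,
        (∫⁻ x in (Metric.ball (0 : EuclideanSpace ℝ (Fin N)) ((j:ℝ)+1))ᶜ, X x ^ p ∂volume)
        = (∫⁻ x, X x ^ p ∂volume)
          - ∫⁻ x in Metric.ball (0 : EuclideanSpace ℝ (Fin N)) ((j:ℝ)+1), X x ^ p ∂volume := by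
      intro j
      refine ENNReal.eq_sub_of_add_eq (ne_top_of_le_ne_top hΞtop (setLIntegral_le_lintegral _ _)) ?_
      rw [add_comm]
      exact lintegral_add_compl _ measurableSet_ball
    have h2 := ENNReal.Tendsto.sub (tendsto_const_nhds :
      Tendsto (fun _ : ℕ => ∫⁻ x, X x ^ p ∂volume) atTop (𝓝 (∫⁻ x, X x ^ p ∂volume))) hball
      (Or.inl hΞtop)
    rw [tsub_self] at h2
    simpa only [hsub] using h2
  -- splitting of I
  have hIle : ∀ n, I n ≤ ENNReal.ofReal r *
      ((∫⁻ x, X x * A n x * B n x ∂volume) + ∫⁻ x, X x * A' x * B n x ∂volume) := by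
    intro n
    calc I n ≤ ∫⁻ x, ENNReal.ofReal r * (X x * A n x * B n x + X x * A' x * B n x) ∂volume :=
        lintegral_mono (hpt n)
      _ = ENNReal.ofReal r * ∫⁻ x, (X x * A n x * B n x + X x * A' x * B n x) ∂volume :=
        lintegral_const_mul' _ _ ENNReal.ofReal_ne_top
      _ = _ := by rw [lintegral_add_left' (f := fun x => X x * A n x * B n x) ((mX.mul (mA n)).mul (mB n))]
  -- Hölder on pieces
  have holder_piece : ∀ n (S : Set (EuclideanSpace ℝ (Fin N))),
      (∫⁻ x in S, X x * A n x * B n x ∂volume) ≤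
        (∫⁻ x in S, X x ^ p ∂volume) ^ (1/p) * K ^ ((2:ℝ)/q) *
          (∫⁻ x in S, B n x ^ (2:ℝ) ∂volume) ^ (1/(2:ℝ)) := fun n S =>
    le_trans (holder3 _ mX.restrict (mA n).restrict (mB n).restrict hp hq two_pos hpqs)
      (mul_le_mul' (mul_le_mul' le_rfl (midbound n S)) le_rfl)
  have holder_piece' : ∀ n (S : Set (EuclideanSpace ℝ (Fin N))),
      (∫⁻ x in S, X x * A' x * B n x ∂volume) ≤
        (∫⁻ x in S, X x ^ p ∂volume) ^ (1/p) * K ^ ((2:ℝ)/q) *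
          (∫⁻ x in S, B n x ^ (2:ℝ) ∂volume) ^ (1/(2:ℝ)) := fun n S =>
    le_trans (holder3 _ mX.restrict mA'.restrict (mB n).restrict hp hq two_pos hpqs)
      (mul_le_mul' (mul_le_mul' le_rfl (midbound' S)) le_rfl)
  -- constants
  set c1 : ℝ≥0∞ := ENNReal.ofReal r * (2 * (KΞ * K ^ ((2:ℝ)/q))) with hc1
  set c2 : ℝ≥0∞ := ENNReal.ofReal r * (2 * (K ^ ((2:ℝ)/q) * K)) with hc2
  have hKq_top : K ^ ((2:ℝ)/q) ≠ ∞ := ENNReal.rpow_ne_top_of_nonneg (by positivity) hKtop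
  have hc1top : c1 ≠ ∞ := by
    rw [hc1]
    exact ENNReal.mul_ne_top ENNReal.ofReal_ne_top (ENNReal.mul_ne_top (by simp)
      (ENNReal.mul_ne_top hKΞtop hKq_top))
  have hc2top : c2 ≠ ∞ := by
    rw [hc2]
    exact ENNReal.mul_ne_top ENNReal.ofReal_ne_top (ENNReal.mul_ne_top (by simp)
      (ENNReal.mul_ne_top hKq_top hKtop))
  -- main bound
  have bound : ∀ n (j : ℕ), I n ≤
      c1 * (∫⁻ x in Metric.ball (0 : EuclideanSpace ℝ (Fin N)) ((j:ℝ)+1),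
        B n x ^ (2:ℝ) ∂volume) ^ (1/(2:ℝ)) +
      c2 * (∫⁻ x in (Metric.ball (0 : EuclideanSpace ℝ (Fin N)) ((j:ℝ)+1))ᶜ,
        X x ^ p ∂volume) ^ (1/p) := by
    intro n j
    have hmS : MeasurableSet (Metric.ball (0 : EuclideanSpace ℝ (Fin N)) ((j:ℝ)+1)) :=
      measurableSet_ball
    have p1 : (∫⁻ x in Metric.ball (0 : EuclideanSpace ℝ (Fin N)) ((j:ℝ)+1),
        X x * A n x * B n x ∂volume) ≤
        KΞ * K ^ ((2:ℝ)/q) * (∫⁻ x in Metric.ball (0 : EuclideanSpace ℝ (Fin N)) ((j:ℝ)+1),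
          B n x ^ (2:ℝ) ∂volume) ^ (1/(2:ℝ)) :=
      le_trans (holder_piece n _) (mul_le_mul' (mul_le_mul' (Xbound _) le_rfl) le_rfl)
    have p1' : (∫⁻ x in Metric.ball (0 : EuclideanSpace ℝ (Fin N)) ((j:ℝ)+1),
        X x * A' x * B n x ∂volume) ≤
        KΞ * K ^ ((2:ℝ)/q) * (∫⁻ x in Metric.ball (0 : EuclideanSpace ℝ (Fin N)) ((j:ℝ)+1),
          B n x ^ (2:ℝ) ∂volume) ^ (1/(2:ℝ)) :=
      le_trans (holder_piece' n _) (mul_le_mul' (mul_le_mul' (Xbound _) le_rfl) le_rfl)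
    have p2 : (∫⁻ x in (Metric.ball (0 : EuclideanSpace ℝ (Fin N)) ((j:ℝ)+1))ᶜ,
        X x * A n x * B n x ∂volume) ≤
        (∫⁻ x in (Metric.ball (0 : EuclideanSpace ℝ (Fin N)) ((j:ℝ)+1))ᶜ,
          X x ^ p ∂volume) ^ (1/p) * K ^ ((2:ℝ)/q) * K :=
      le_trans (holder_piece n _) (mul_le_mul' le_rfl (Bbound n _))
    have p2' : (∫⁻ x in (Metric.ball (0 : EuclideanSpace ℝ (Fin N)) ((j:ℝ)+1))ᶜ,
        X x * A' x * B n x ∂volume) ≤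
        (∫⁻ x in (Metric.ball (0 : EuclideanSpace ℝ (Fin N)) ((j:ℝ)+1))ᶜ,
          X x ^ p ∂volume) ^ (1/p) * K ^ ((2:ℝ)/q) * K :=
      le_trans (holder_piece' n _) (mul_le_mul' le_rfl (Bbound n _))
    have e1 : (∫⁻ x, X x * A n x * B n x ∂volume) =
        (∫⁻ x in Metric.ball (0 : EuclideanSpace ℝ (Fin N)) ((j:ℝ)+1), X x * A n x * B n x ∂volume)
        + ∫⁻ x in (Metric.ball (0 : EuclideanSpace ℝ (Fin N)) ((j:ℝ)+1))ᶜ,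
          X x * A n x * B n x ∂volume :=
      (lintegral_add_compl _ hmS).symm
    have e2 : (∫⁻ x, X x * A' x * B n x ∂volume) =
        (∫⁻ x in Metric.ball (0 : EuclideanSpace ℝ (Fin N)) ((j:ℝ)+1), X x * A' x * B n x ∂volume)
        + ∫⁻ x in (Metric.ball (0 : EuclideanSpace ℝ (Fin N)) ((j:ℝ)+1))ᶜ,
          X x * A' x * B n x ∂volume :=
      (lintegral_add_compl _ hmS).symm
    calc I n ≤ ENNReal.ofReal r *
        ((∫⁻ x, X x * A n x * B n x ∂volume) + ∫⁻ x, X x * A' x * B n x ∂volume) := hIle n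
      _ ≤ ENNReal.ofReal r *
          ((KΞ * K ^ ((2:ℝ)/q) * (∫⁻ x in Metric.ball (0 : EuclideanSpace ℝ (Fin N)) ((j:ℝ)+1),
              B n x ^ (2:ℝ) ∂volume) ^ (1/(2:ℝ)) +
            (∫⁻ x in (Metric.ball (0 : EuclideanSpace ℝ (Fin N)) ((j:ℝ)+1))ᶜ,
              X x ^ p ∂volume) ^ (1/p) * K ^ ((2:ℝ)/q) * K) +
           (KΞ * K ^ ((2:ℝ)/q) * (∫⁻ x in Metric.ball (0 : EuclideanSpace ℝ (Fin N)) ((j:ℝ)+1),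
              B n x ^ (2:ℝ) ∂volume) ^ (1/(2:ℝ)) +
            (∫⁻ x in (Metric.ball (0 : EuclideanSpace ℝ (Fin N)) ((j:ℝ)+1))ᶜ,
              X x ^ p ∂volume) ^ (1/p) * K ^ ((2:ℝ)/q) * K)) := by
          refine mul_le_mul' le_rfl ?_
          rw [e1, e2]
          exact add_le_add (add_le_add p1 p2) (add_le_add p1' p2')
      _ = _ := by
          rw [hc1, hc2]
          ring
  -- limsup argument
  have hItend : Tendsto I atTop (𝓝 0) := by
    have hlimsup : ∀ j : ℕ, Filter.limsup I atTop ≤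
        c2 * (∫⁻ x in (Metric.ball (0 : EuclideanSpace ℝ (Fin N)) ((j:ℝ)+1))ᶜ,
          X x ^ p ∂volume) ^ (1/p) := by
      intro j
      have h1 : Tendsto (fun n =>
          (∫⁻ x in Metric.ball (0 : EuclideanSpace ℝ (Fin N)) ((j:ℝ)+1),
            B n x ^ (2:ℝ) ∂volume) ^ (1/(2:ℝ))) atTop (𝓝 0) := by
        have h0 := hCB ((j:ℝ)+1) (by positivity)
        have h2 := (ENNReal.continuous_rpow_const (y := 1/(2:ℝ))).tendsto 0 |>.comp h0
        simpa [Function.comp_def, ENNReal.zero_rpow_of_pos (by norm_num : (0:ℝ) < 1/2)] using h2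
      have h2 : Tendsto (fun n => c1 *
          (∫⁻ x in Metric.ball (0 : EuclideanSpace ℝ (Fin N)) ((j:ℝ)+1),
            B n x ^ (2:ℝ) ∂volume) ^ (1/(2:ℝ))) atTop (𝓝 0) := by
        simpa using ENNReal.Tendsto.const_mul h1 (Or.inr hc1top)
      have hb := h2.add (tendsto_const_nhds (x :=
        c2 * (∫⁻ x in (Metric.ball (0 : EuclideanSpace ℝ (Fin N)) ((j:ℝ)+1))ᶜ,
          X x ^ p ∂volume) ^ (1/p)))
      rw [zero_add] at hb
      calc Filter.limsup I atTop ≤ Filter.limsup (fun n =>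
          c1 * (∫⁻ x in Metric.ball (0 : EuclideanSpace ℝ (Fin N)) ((j:ℝ)+1),
            B n x ^ (2:ℝ) ∂volume) ^ (1/(2:ℝ)) +
          c2 * (∫⁻ x in (Metric.ball (0 : EuclideanSpace ℝ (Fin N)) ((j:ℝ)+1))ᶜ,
            X x ^ p ∂volume) ^ (1/p)) atTop :=
          limsup_le_limsup (Eventually.of_forall (fun n => bound n j))
        _ = _ := hb.limsup_eq
    have hto : Tendsto (fun j : ℕ => c2 *
        (∫⁻ x in (Metric.ball (0 : EuclideanSpace ℝ (Fin N)) ((j:ℝ)+1))ᶜ,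
          X x ^ p ∂volume) ^ (1/p)) atTop (𝓝 0) := by
      have h1 := (ENNReal.continuous_rpow_const (y := 1/p)).tendsto 0 |>.comp hTail
      rw [ENNReal.zero_rpow_of_pos (by positivity : (0:ℝ) < 1/p)] at h1
      simpa [Function.comp_def] using ENNReal.Tendsto.const_mul h1 (Or.inr hc2top)
    have h0 : Filter.limsup I atTop ≤ 0 := ge_of_tendsto' hto hlimsup
    exact tendsto_of_le_liminf_of_limsup_le zero_le h0
  -- conclusion
  have htoReal : Tendsto (fun n => (I n).toReal) atTop (𝓝 0) := by
    have h1 := (ENNReal.tendsto_toReal (by simp : (0:ℝ≥0∞) ≠ ∞)).comp hItend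
    simpa [Function.comp_def] using h1
  refine squeeze_zero_norm (fun n => ?_) htoReal
  simp only [hIdef]
  simpa only [ofReal_norm_eq_coe_nnnorm] using norm_integral_le_lintegral_norm
    (μ := (volume : Measure (EuclideanSpace ℝ (Fin N))))
    (fun x => (g x ((E (u n) : EuclideanSpace ℝ (Fin N) → ℝ) x) -
        g x ((E ulim : EuclideanSpace ℝ (Fin N) → ℝ) x)) *
      ((E (u n) : EuclideanSpace ℝ (Fin N) → ℝ) x -
        (E ulim : EuclideanSpace ℝ (Fin N) → ℝ) x))
end
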